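/- Closed form for the counting gap: for every integer k ≥ 1 and every nonzero a ∈ ZMod q, the (integer) difference satisfies N k a − N k 0 = (−1)^(k−1). In particular N 1 0 = 0 and N 1 a = 1, and for every k the counts of tuples of units summing to a nonzero value and to zero differ by exactly one. -/

import Mathlib

/-- Number of tuples of `k` units of `ZMod q` whose sum equals `s`. -/
def unitSumCount (q : ℕ) [Fact (Nat.Prime q)] (k : ℕ) (s : ZMod q) : ℕ :=
  (Finset.univ.filter (fun r : Fin k → (ZMod q)ˣ => ∑ i, ((r i : ZMod q)) = s)).card

lemma unitSumCount_eq_card (q : ℕ) [Fact (Nat.Prime q)] (k : ℕ) (s : ZMod q) :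
    unitSumCount q k s
      = Fintype.card {r : Fin k → (ZMod q)ˣ // ∑ i, ((r i : ZMod q)) = s} := by
  rw [unitSumCount, Fintype.card_subtype]

lemma unitSumCount_mul (q : ℕ) [Fact (Nat.Prime q)] (k : ℕ) (c : (ZMod q)ˣ) (s : ZMod q) :
    unitSumCount q k ((c : ZMod q) * s) = unitSumCount q k s := by
  rw [unitSumCount_eq_card, unitSumCount_eq_card]
  refine Fintype.card_congr ?_
  refine { toFun := fun r => ⟨fun i => c⁻¹ * r.1 i, ?_⟩
           invFun := fun r => ⟨fun i => c * r.1 i, ?_⟩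
           left_inv := ?_, right_inv := ?_ }
  · obtain ⟨r, hr⟩ := r
    simp only [Units.val_mul, ← Finset.mul_sum, hr]
    field_simp
    rw [Units.inv_mul, one_mul]
  · obtain ⟨r, hr⟩ := r
    simp only [Units.val_mul, ← Finset.mul_sum, hr]
  · intro ⟨r, hr⟩; ext i; simp
  · intro ⟨r, hr⟩; ext i; simp

lemma unitSumCount_succ (q : ℕ) [Fact (Nat.Prime q)] (k : ℕ) (s : ZMod q) :
    unitSumCount q (k + 1) s = ∑ u : (ZMod q)ˣ, unitSumCount q k (s - u) := by
  simp only [unitSumCount_eq_card]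
  rw [← Fintype.card_sigma]
  refine Fintype.card_congr ?_
  refine { toFun := fun r => ⟨r.1 0, ⟨fun i => r.1 i.succ, ?_⟩⟩
           invFun := fun p => ⟨Fin.cons p.1 p.2.1, ?_⟩
           left_inv := ?_, right_inv := ?_ }
  · obtain ⟨r, hr⟩ := r
    rw [Fin.sum_univ_succ] at hr
    simp only [← hr]; ring
  · obtain ⟨u, r, hr⟩ := p
    rw [Fin.sum_univ_succ]
    simp [hr]
  · intro ⟨r, hr⟩
    ext i
    refine Fin.cases ?_ ?_ i <;> simp
  · intro ⟨u, r, hr⟩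
    ext i <;> simp

lemma unitSumCount_ne_zero (q : ℕ) [Fact (Nat.Prime q)] (k : ℕ) (s : ZMod q) (hs : s ≠ 0) :
    unitSumCount q k s = unitSumCount q k 1 := by
  have := unitSumCount_mul q k (Units.mk0 s hs) 1
  simpa using this

/-- Closed form for the counting gap: for `k ≥ 1` and nonzero `a`,
`N k a - N k 0 = (-1)^(k-1)` (as integers). -/
theorem unitSumCount_gap_closed_form (q : ℕ) [Fact (Nat.Prime q)] (k : ℕ) (hk : 1 ≤ k)
    (a : ZMod q) (ha : a ≠ 0) :
    (unitSumCount q k a : ℤ) - (unitSumCount q k 0 : ℤ) = (-1) ^ (k - 1) := by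
  obtain ⟨n, rfl⟩ := Nat.exists_eq_add_of_le hk
  rw [Nat.add_sub_cancel_left]
  clear hk
  induction n generalizing a with
  | zero =>
    rw [unitSumCount_ne_zero q 1 a ha]
    have h1 : unitSumCount q 1 1 = 1 := by
      rw [unitSumCount]
      rw [Finset.card_eq_one]
      refine ⟨fun _ => 1, ?_⟩
      ext r
      simp only [Finset.mem_filter, Finset.mem_univ, true_and, Finset.mem_singleton,
        Fin.sum_univ_one]
      constructor
      · intro h; funext i; fin_cases i; exact Units.ext h
      · intro h; rw [h]; simp
    have h0 : unitSumCount q 1 0 = 0 := by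
      rw [unitSumCount, Finset.card_eq_zero]
      ext r
      simp only [Finset.mem_filter, Finset.mem_univ, true_and, Fin.sum_univ_one,
        Finset.notMem_empty, iff_false]
      exact (r 0).ne_zero
    rw [h1, h0]; simp
  | succ n ih =>
    have key : ∀ b : ZMod q, b ≠ 0 →
        (unitSumCount q (1 + n) b : ℤ) - (unitSumCount q (1 + n) 0 : ℤ) = (-1) ^ n :=
      fun b hb => ih b hb
    have hrecA := unitSumCount_succ q (1 + n) a
    have hrec0 := unitSumCount_succ q (1 + n) 0
    have hone : (1 : ZMod q) ≠ 0 := one_ne_zero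
    have hadd : 1 + (n + 1) = (1 + n) + 1 := by ring
    rw [hadd, hrecA, hrec0]
    push_cast
    rw [← Finset.sum_sub_distrib]
    have ua : (ZMod q)ˣ := Units.mk0 a ha
    rw [Finset.sum_eq_single (Units.mk0 a ha)]
    · simp only [Units.val_mk0, sub_self, zero_sub]
      rw [unitSumCount_ne_zero q (1+n) (-a) (by simp [ha])]
      have := key 1 hone
      rw [show (-1 : ℤ)^(n+1) = -((-1)^n) by ring, ← this]
      ring
    · intro u _ hu
      have h1 : a - (u : ZMod q) ≠ 0 := by
        intro h
        apply hu
        have : a = (u : ZMod q) := by linear_combination h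
        ext; simp [← this]
      have h2 : (0 : ZMod q) - (u : ZMod q) ≠ 0 := by simp [u.ne_zero]
      rw [unitSumCount_ne_zero q (1+n) _ h1, unitSumCount_ne_zero q (1+n) _ h2]
      ring
    · intro h; exact absurd (Finset.mem_univ _) h
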